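/- Eigenvalue bounds for biased shuffles with α ≤ 1: let α ≤ 1, n ≥ 1, and let λ ⊢ n be a partition with first part λ₁ = n − k. If k ≤ n/4 then eig_α(T_λ^→) ≤ 1 − (n−k+1)·k·n^α/(n·N_α(n)); if k > n/4 then eig_α(T_λ^→) ≤ 1 − k·n^α/(2·N_α(n)). -/

import Mathlib

open scoped BigOperators

/-- `N_α(n) = ∑_{j=1}^n j^α`. -/
noncomputable def Nalpha (α : ℝ) (n : ℕ) : ℝ := ∑ j ∈ Finset.Icc 1 n, (j : ℝ) ^ α

/-- The biased eigenvalue statistic of a tableau-filling `T` of the Young diagram `μ`: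
`eig_α(T) = (1/N_α(n)) ∑_{(i,j)∈μ} (j-i+1)·T(i,j)^{α−1}` (cells are 0-indexed, which
leaves `j-i+1` unchanged). -/
noncomputable def eigb (α : ℝ) (μ : YoungDiagram) (T : ℕ × ℕ → ℕ) : ℝ :=
  (Nalpha α μ.card)⁻¹ *
    ∑ c ∈ μ.cells, (((c.2 : ℝ) - (c.1 : ℝ) + 1) * ((T c : ℝ) ^ (α - 1)))
/-- The row-reading tableau `T_λ^→`: entries `1,…,n` inserted along rows, left to right,
top row first.  The value at a cell is its (1-indexed) rank in row-major order. -/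
def rowTab (μ : YoungDiagram) : ℕ × ℕ → ℕ := fun c =>
  (μ.cells.filter (fun c' => c'.1 < c.1 ∨ (c'.1 = c.1 ∧ c'.2 ≤ c.2))).card

namespace EigAux

/-- number of cells strictly above the row of `c` -/
def Rc (μ : YoungDiagram) (c : ℕ × ℕ) : ℕ := (μ.cells.filter (fun c' => c'.1 < c.1)).card

lemma rowTab_eq {μ : YoungDiagram} {c : ℕ × ℕ} (hc : c ∈ μ.cells) :
    rowTab μ c = Rc μ c + (c.2 + 1) := by
  unfold rowTab Rc
  rw [Finset.filter_or, Finset.card_union_of_disjoint]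
  · congr 1
    have : μ.cells.filter (fun c' => c'.1 = c.1 ∧ c'.2 ≤ c.2)
        = {c.1} ×ˢ Finset.range (c.2 + 1) := by
      ext ⟨i, j⟩
      simp only [Finset.mem_filter, YoungDiagram.mem_cells, Finset.mem_product,
        Finset.mem_singleton, Finset.mem_range, Nat.lt_succ_iff]
      constructor
      · rintro ⟨_, hi, hj⟩; exact ⟨hi, hj⟩
      · rintro ⟨hi, hj⟩
        refine ⟨μ.up_left_mem (le_of_eq hi) hj ?_, hi, hj⟩
        simpa [YoungDiagram.mem_cells] using hc
    rw [this, Finset.card_product, Finset.card_singleton, Finset.card_range, one_mul]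
  · rw [Finset.disjoint_left]
    intro a ha ha'
    simp only [Finset.mem_filter] at ha ha'
    omega

lemma rowTab_strictMono {μ : YoungDiagram} {c d : ℕ × ℕ} (hc : c ∈ μ.cells) (hd : d ∈ μ.cells)
    (h : c.1 < d.1 ∨ (c.1 = d.1 ∧ c.2 < d.2)) : rowTab μ c < rowTab μ d := by
  unfold rowTab
  apply Finset.card_lt_card
  rw [Finset.ssubset_def]
  constructor
  · intro a ha
    simp only [Finset.mem_filter] at ha ⊢
    exact ⟨ha.1, by omega⟩
  · intro hsub
    have hd' : d ∈ μ.cells.filter (fun c' => c'.1 < c.1 ∨ (c'.1 = c.1 ∧ c'.2 ≤ c.2)) := by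
      apply hsub
      simp only [Finset.mem_filter]
      exact ⟨hd, Or.inr ⟨by simp, le_refl _⟩⟩
    simp only [Finset.mem_filter] at hd'
    omega

lemma rowTab_injOn {μ : YoungDiagram} : Set.InjOn (rowTab μ) μ.cells := by
  intro c hc' d hd' hcd
  have hc : c ∈ μ.cells := Finset.mem_coe.mp hc'
  have hd : d ∈ μ.cells := Finset.mem_coe.mp hd'
  by_contra hne
  have : rowTab μ c ≠ rowTab μ d := by
    rcases Nat.lt_trichotomy c.1 d.1 with hlt | heq | hgt
    · exact Nat.ne_of_lt (rowTab_strictMono hc hd (Or.inl hlt))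
    · rcases Nat.lt_trichotomy c.2 d.2 with h2 | h2 | h2
      · exact Nat.ne_of_lt (rowTab_strictMono hc hd (Or.inr ⟨heq, h2⟩))
      · exact absurd (Prod.ext heq h2) hne
      · exact (Nat.ne_of_lt (rowTab_strictMono hd hc (Or.inr ⟨heq.symm, h2⟩))).symm
    · exact (Nat.ne_of_lt (rowTab_strictMono hd hc (Or.inl hgt))).symm
  exact this hcd

lemma rowTab_mem_Icc {μ : YoungDiagram} {c : ℕ × ℕ} (hc : c ∈ μ.cells) :
    rowTab μ c ∈ Finset.Icc 1 μ.card := by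
  unfold rowTab
  rw [Finset.mem_Icc]
  refine ⟨?_, Finset.card_le_card (Finset.filter_subset _ _)⟩
  rw [Nat.one_le_iff_ne_zero, ← Nat.pos_iff_ne_zero, Finset.card_pos]
  refine ⟨c, ?_⟩
  simp only [Finset.mem_filter]
  exact ⟨hc, Or.inr ⟨by simp, le_refl _⟩⟩

lemma image_rowTab {μ : YoungDiagram} : μ.cells.image (rowTab μ) = Finset.Icc 1 μ.card := by
  apply Finset.eq_of_subset_of_card_le
  · intro x hx
    rcases Finset.mem_image.mp hx with ⟨c, hc, rfl⟩
    exact rowTab_mem_Icc hc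
  · rw [Nat.card_Icc, Finset.card_image_of_injOn rowTab_injOn]
    have : μ.card = μ.cells.card := rfl
    omega

lemma sum_transport {μ : YoungDiagram} (f : ℕ → ℝ) :
    ∑ j ∈ Finset.Icc 1 μ.card, f j = ∑ c ∈ μ.cells, f (rowTab μ c) := by
  rw [← image_rowTab, Finset.sum_image (fun c hc d hd h => rowTab_injOn hc hd h)]

/-- card of a filtered product as a sum of filter cards -/
lemma card_filter_product (s t : Finset (ℕ × ℕ)) (P : ℕ × ℕ → ℕ × ℕ → Prop) [∀ a b, Decidable (P a b)] :
    ((s ×ˢ t).filter (fun p => P p.1 p.2)).card = ∑ a ∈ s, (t.filter (P a)).card := by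
  rw [Finset.card_filter, Finset.sum_product]
  simp only [Finset.card_filter]


lemma filter_row0 (μ : YoungDiagram) :
    μ.cells.filter (fun c => ¬ 1 ≤ c.1) = μ.row 0 := by
  ext c
  simp only [Finset.mem_filter, YoungDiagram.mem_row_iff, YoungDiagram.mem_cells]
  constructor
  · rintro ⟨h1, h2⟩; exact ⟨h1, by omega⟩
  · rintro ⟨h1, h2⟩; exact ⟨h1, by omega⟩

lemma card_pos_rows (μ : YoungDiagram) :
    (μ.cells.filter (fun c => 1 ≤ c.1)).card + μ.rowLen 0 = μ.card := by
  rw [μ.rowLen_eq_card (i := 0), ← filter_row0]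
  exact Finset.card_filter_add_card_filter_not _

lemma rowLen_le_Rc {μ : YoungDiagram} {c : ℕ × ℕ} (hc1 : 1 ≤ c.1) :
    μ.rowLen 0 ≤ Rc μ c := by
  rw [μ.rowLen_eq_card (i := 0)]
  apply Finset.card_le_card
  intro a ha
  rw [YoungDiagram.mem_row_iff] at ha
  simp only [Finset.mem_filter, YoungDiagram.mem_cells]
  exact ⟨ha.1, by omega⟩

lemma sum_Rc_bound (μ : YoungDiagram) (k : ℕ) (hk : μ.rowLen 0 + k = μ.card) :
    μ.card * k ≤ 2 * ∑ c ∈ μ.cells, Rc μ c := by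
  classical
  set s := μ.cells with hs
  have hsum : ∑ c ∈ s, Rc μ c = ((s ×ˢ s).filter (fun p => p.2.1 < p.1.1)).card := by
    rw [Finset.card_filter, Finset.sum_product]
    simp only [Rc, Finset.card_filter, hs]
  have hDU : ((s ×ˢ s).filter (fun p => p.2.1 < p.1.1)).card
      = ((s ×ˢ s).filter (fun p => p.1.1 < p.2.1)).card := by
    refine Finset.card_bij' (fun p _ => p.swap) (fun p _ => p.swap) ?_ ?_
      (fun p _ => rfl) (fun p _ => rfl)
    · intro p hp
      simp only [Finset.mem_filter, Finset.mem_product] at hp ⊢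
      exact ⟨⟨hp.1.2, hp.1.1⟩, hp.2⟩
    · intro p hp
      simp only [Finset.mem_filter, Finset.mem_product] at hp ⊢
      exact ⟨⟨hp.1.2, hp.1.1⟩, hp.2⟩
  have hsplit1 := Finset.card_filter_add_card_filter_not
    (s := s ×ˢ s) (p := fun p => p.2.1 < p.1.1)
  have hsplit2 := Finset.card_filter_add_card_filter_not
    (s := (s ×ˢ s).filter (fun p => ¬ p.2.1 < p.1.1)) (p := fun p => p.1.1 < p.2.1)
  rw [Finset.filter_filter, Finset.filter_filter] at hsplit2
  have he1 : (s ×ˢ s).filter (fun p => ¬p.2.1 < p.1.1 ∧ p.1.1 < p.2.1)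
      = (s ×ˢ s).filter (fun p => p.1.1 < p.2.1) := by
    apply Finset.filter_congr; intro p _; constructor <;> intro h <;> omega
  have he2 : (s ×ˢ s).filter (fun p => ¬p.2.1 < p.1.1 ∧ ¬p.1.1 < p.2.1)
      = (s ×ˢ s).filter (fun p => p.2.1 = p.1.1) := by
    apply Finset.filter_congr; intro p _; constructor <;> intro h <;> omega
  rw [he1, he2] at hsplit2
  have hE : ((s ×ˢ s).filter (fun p => p.2.1 = p.1.1)).card ≤ μ.card * μ.rowLen 0 := by
    have hcf : ((s ×ˢ s).filter (fun p => p.2.1 = p.1.1)).card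
        = ∑ c ∈ s, (s.filter (fun c' => c'.1 = c.1)).card := by
      rw [Finset.card_filter, Finset.sum_product]
      simp only [Finset.card_filter]
    rw [hcf]
    have hb : ∀ c ∈ s, (s.filter (fun c' => c'.1 = c.1)).card ≤ μ.rowLen 0 := by
      intro c _
      have hr : s.filter (fun c' => c'.1 = c.1) = μ.row c.1 := by
        ext a
        simp only [Finset.mem_filter, YoungDiagram.mem_row_iff, YoungDiagram.mem_cells, hs]
      rw [hr, ← μ.rowLen_eq_card]
      exact μ.rowLen_anti 0 c.1 (Nat.zero_le _)
    calc ∑ c ∈ s, (s.filter (fun c' => c'.1 = c.1)).card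
        ≤ ∑ _c ∈ s, μ.rowLen 0 := Finset.sum_le_sum hb
      _ ≤ μ.card * μ.rowLen 0 := by
          rw [Finset.sum_const, smul_eq_mul]
  have hprod : (s ×ˢ s).card = μ.card * μ.card := by
    rw [Finset.card_product]
  have hmul : μ.card * μ.card = μ.card * μ.rowLen 0 + μ.card * k := by
    rw [← Nat.mul_add, hk]
  linarith [hsum, hDU, hE, hsplit1, hsplit2, hprod, hmul]

end EigAux

/-- Eigenvalue bounds for biased shuffles with `α ≤ 1`: if `λ ⊢ n` (`n ≥ 1`) has first
part `λ₁ = n − k`, then `eig_α(T_λ^→) ≤ 1 − (n−k+1)·k·n^α/(n·N_α(n))` when `k ≤ n/4`,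
and `eig_α(T_λ^→) ≤ 1 − k·n^α/(2·N_α(n))` when `k > n/4`. -/
theorem eigb_rowTab_bound_small_alpha (α : ℝ) (hα : α ≤ 1) (n : ℕ) (hn : 1 ≤ n)
    (μ : YoungDiagram) (hcard : μ.card = n) (k : ℕ) (hk : μ.rowLen 0 + k = n) :
    ((k : ℝ) ≤ (n : ℝ) / 4 →
        eigb α μ (rowTab μ) ≤
          1 - (((n : ℝ) - (k : ℝ) + 1) * (k : ℝ) * (n : ℝ) ^ α) / ((n : ℝ) * Nalpha α n)) ∧
      ((n : ℝ) / 4 < (k : ℝ) →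
        eigb α μ (rowTab μ) ≤ 1 - ((k : ℝ) * (n : ℝ) ^ α) / (2 * Nalpha α n)) := by
  classical
  have hn0 : (0:ℝ) < n := by exact_mod_cast hn
  have hkn : k ≤ n := by omega
  set N := Nalpha α n with hNdef
  have hNpos : 0 < N := by
    rw [hNdef]; unfold Nalpha
    apply Finset.sum_pos
    · intro j hj
      rw [Finset.mem_Icc] at hj
      exact Real.rpow_pos_of_pos (by exact_mod_cast hj.1) α
    · exact ⟨1, by rw [Finset.mem_Icc]; omega⟩
  have hNsum : N = ∑ c ∈ μ.cells, (rowTab μ c : ℝ) * (rowTab μ c : ℝ) ^ (α - 1) := by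
    rw [hNdef]; unfold Nalpha
    rw [← hcard, EigAux.sum_transport (μ := μ) (fun j => (j:ℝ) ^ α)]
    apply Finset.sum_congr rfl
    intro c hc
    have h1 := EigAux.rowTab_mem_Icc hc
    rw [Finset.mem_Icc] at h1
    have hpos : (0:ℝ) < (rowTab μ c : ℝ) := by
      have : 0 < rowTab μ c := by omega
      exact_mod_cast this
    calc ((rowTab μ c : ℝ)) ^ α = (rowTab μ c : ℝ) ^ (1 + (α - 1)) := by congr 1; ring
      _ = (rowTab μ c : ℝ) * (rowTab μ c : ℝ) ^ (α - 1) := by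
          rw [Real.rpow_add hpos, Real.rpow_one]
  have hkey : 1 - eigb α μ (rowTab μ) =
      N⁻¹ * ∑ c ∈ μ.cells, ((EigAux.Rc μ c : ℝ) + (c.1 : ℝ)) * (rowTab μ c : ℝ) ^ (α - 1) := by
    unfold eigb
    rw [hcard]
    have hsub : ∑ c ∈ μ.cells, ((EigAux.Rc μ c : ℝ) + (c.1:ℝ)) * (rowTab μ c:ℝ)^(α-1)
        = ∑ c ∈ μ.cells, ((rowTab μ c : ℝ) * (rowTab μ c:ℝ)^(α-1)
            - ((c.2:ℝ) - (c.1:ℝ) + 1) * (rowTab μ c:ℝ)^(α-1)) := by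
      apply Finset.sum_congr rfl
      intro c hc
      have hcast : (rowTab μ c : ℝ) = (EigAux.Rc μ c : ℝ) + (c.2 : ℝ) + 1 := by
        rw [EigAux.rowTab_eq hc]; push_cast; ring
      rw [hcast]; ring
    rw [hsub, Finset.sum_sub_distrib, ← hNsum, mul_sub, inv_mul_cancel₀ (ne_of_gt hNpos)]
  set S : ℝ := ∑ c ∈ μ.cells, ((EigAux.Rc μ c : ℝ) + (c.1:ℝ)) with hSdef
  have hlow : (n:ℝ)^(α-1) * S ≤
      ∑ c ∈ μ.cells, ((EigAux.Rc μ c:ℝ) + (c.1:ℝ)) * (rowTab μ c:ℝ)^(α-1) := by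
    rw [hSdef, Finset.mul_sum]
    apply Finset.sum_le_sum
    intro c hc
    rw [mul_comm ((n:ℝ)^(α-1))]
    apply mul_le_mul_of_nonneg_left _ (by positivity)
    have h1 := EigAux.rowTab_mem_Icc hc
    rw [Finset.mem_Icc, hcard] at h1
    have hpos : (0:ℝ) < (rowTab μ c : ℝ) := by
      have : 0 < rowTab μ c := by omega
      exact_mod_cast this
    exact Real.rpow_le_rpow_of_nonpos hpos (by exact_mod_cast h1.2) (by linarith)
  have hfinal : N⁻¹ * ((n:ℝ)^(α-1) * S) ≤ 1 - eigb α μ (rowTab μ) := by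
    rw [hkey]
    exact mul_le_mul_of_nonneg_left hlow (inv_pos.mpr hNpos).le
  have hax : (μ.rowLen 0 : ℝ) + (k:ℝ) = (n:ℝ) := by exact_mod_cast hk
  -- Bound A : k * (n - k + 1) ≤ S
  have hSA : (k:ℝ) * ((n:ℝ) - (k:ℝ) + 1) ≤ S := by
    have hcardf : (μ.cells.filter (fun c => 1 ≤ c.1)).card = k := by
      have := EigAux.card_pos_rows μ
      omega
    have hsub : ∑ _c ∈ μ.cells.filter (fun c => 1 ≤ c.1), ((n:ℝ) - (k:ℝ) + 1)
        ≤ ∑ c ∈ μ.cells.filter (fun c => 1 ≤ c.1), ((EigAux.Rc μ c:ℝ) + (c.1:ℝ)) := by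
      apply Finset.sum_le_sum
      intro c hc
      rw [Finset.mem_filter] at hc
      have h1 : (μ.rowLen 0 : ℝ) ≤ (EigAux.Rc μ c : ℝ) := by
        exact_mod_cast EigAux.rowLen_le_Rc (μ := μ) hc.2
      have hc1 : (1:ℝ) ≤ (c.1:ℝ) := by exact_mod_cast hc.2
      linarith
    rw [Finset.sum_const, hcardf, nsmul_eq_mul] at hsub
    have hmono : ∑ c ∈ μ.cells.filter (fun c => 1 ≤ c.1), ((EigAux.Rc μ c:ℝ) + (c.1:ℝ)) ≤ S := by
      rw [hSdef]
      apply Finset.sum_le_sum_of_subset_of_nonneg (Finset.filter_subset _ _)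
      intro c _ _
      positivity
    linarith
  -- Bound B : n * k / 2 ≤ S
  have hSB : (n:ℝ) * (k:ℝ) / 2 ≤ S := by
    have h1 := EigAux.sum_Rc_bound μ k (by omega)
    rw [hcard] at h1
    have h2 : (n:ℝ) * (k:ℝ) ≤ 2 * ∑ c ∈ μ.cells, (EigAux.Rc μ c : ℝ) := by
      exact_mod_cast h1
    have h3 : ∑ c ∈ μ.cells, (EigAux.Rc μ c : ℝ) ≤ S := by
      rw [hSdef]
      apply Finset.sum_le_sum
      intro c _
      have : (0:ℝ) ≤ (c.1:ℝ) := Nat.cast_nonneg _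
      linarith
    linarith
  have hpow : (n:ℝ)^(α-1) = (n:ℝ)^α / (n:ℝ) := by
    rw [show α - 1 = α + (-1) by ring, Real.rpow_add hn0, Real.rpow_neg_one]
    ring
  have hpowpos : (0:ℝ) < (n:ℝ)^(α-1) := Real.rpow_pos_of_pos hn0 _
  constructor
  · intro _
    have hB : N⁻¹ * ((n:ℝ)^(α-1) * ((k:ℝ) * ((n:ℝ) - (k:ℝ) + 1)))
        ≤ N⁻¹ * ((n:ℝ)^(α-1) * S) := by
      apply mul_le_mul_of_nonneg_left _ (inv_pos.mpr hNpos).le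
      exact mul_le_mul_of_nonneg_left hSA hpowpos.le
    have heq : N⁻¹ * ((n:ℝ)^(α-1) * ((k:ℝ) * ((n:ℝ) - (k:ℝ) + 1)))
        = (((n:ℝ) - (k:ℝ) + 1) * (k:ℝ) * (n:ℝ)^α) / ((n:ℝ) * N) := by
      rw [hpow]
      field_simp
    rw [heq] at hB
    linarith [hB.trans hfinal]
  · intro _
    have hB : N⁻¹ * ((n:ℝ)^(α-1) * ((n:ℝ) * (k:ℝ) / 2))
        ≤ N⁻¹ * ((n:ℝ)^(α-1) * S) := by
      apply mul_le_mul_of_nonneg_left _ (inv_pos.mpr hNpos).le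
      exact mul_le_mul_of_nonneg_left hSB hpowpos.le
    have heq : N⁻¹ * ((n:ℝ)^(α-1) * ((n:ℝ) * (k:ℝ) / 2))
        = ((k:ℝ) * (n:ℝ)^α) / (2 * N) := by
      rw [hpow]
      field_simp
    rw [heq] at hB
    linarith [hB.trans hfinal]
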